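/- Let X be a connected graph on n vertices with Laplacian eigenvalues 0 = σ₁ < σ₂ ≤ ⋯ ≤ σₙ, and let Y, Z be disjoint vertex sets with no edges between them. Then |Y|·|Z| / ((n−|Y|)(n−|Z|)) ≤ (α + σₙ)² / α², where α = −(σ₂ + σₙ)/2. -/

import Mathlib

open Matrix Finset

private lemma lap_dot_symm {V : Type*} [Fintype V] [DecidableEq V]
    (G : SimpleGraph V) [DecidableRel G.Adj] (u w : V → ℝ) :
    u ⬝ᵥ (G.lapMatrix ℝ *ᵥ w) = (G.lapMatrix ℝ *ᵥ u) ⬝ᵥ w := by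
  rw [dotProduct_mulVec]
  congr 1
  conv_lhs => rw [← (SimpleGraph.isSymm_lapMatrix G (R := ℝ))]
  rw [vecMul_transpose]

private lemma quad_form_bounds {V : Type*} [Fintype V] [DecidableEq V]
    (G : SimpleGraph V) [DecidableRel G.Adj] (hconn : G.Connected)
    (σ₂ σₙ : ℝ)
    (hσ₂ : IsLeast {x : ℝ | x ∈ spectrum ℝ (G.lapMatrix ℝ) ∧ x ≠ 0} σ₂)
    (hσₙ : IsGreatest (spectrum ℝ (G.lapMatrix ℝ)) σₙ)
    (x : V → ℝ) (hx : ∑ v, x v = 0) :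
    σ₂ * (x ⬝ᵥ x) ≤ x ⬝ᵥ (G.lapMatrix ℝ *ᵥ x) ∧
      x ⬝ᵥ (G.lapMatrix ℝ *ᵥ x) ≤ σₙ * (x ⬝ᵥ x) := by
  have hPSD : (G.lapMatrix ℝ).PosSemidef := SimpleGraph.posSemidef_lapMatrix ℝ G
  have hL : (G.lapMatrix ℝ).IsHermitian := hPSD.1
  set L := G.lapMatrix ℝ with hLdef
  set b := hL.eigenvectorBasis with hbdef
  set μ := hL.eigenvalues with hμdef
  set X : EuclideanSpace ℝ V := (WithLp.equiv 2 (V → ℝ)).symm x with hXdef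
  set c : V → ℝ := fun i => inner ℝ (b i) X with hcdef
  have hXx : (WithLp.equiv 2 (V → ℝ)) X = x := Equiv.apply_symm_apply _ x
  have hinner_dot : ∀ u w : EuclideanSpace ℝ V,
      (inner ℝ u w : ℝ) = (WithLp.equiv 2 (V → ℝ)) u ⬝ᵥ (WithLp.equiv 2 (V → ℝ)) w := by
    intro u w
    rw [EuclideanSpace.inner_eq_star_dotProduct, dotProduct_comm]
    rfl
  have hnorm : x ⬝ᵥ x = ∑ i, c i ^ 2 := by
    have h := b.sum_inner_mul_inner X X
    rw [hinner_dot X X, hXx] at h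
    rw [← h]
    exact Finset.sum_congr rfl fun i _ => by
      rw [hcdef]; simp only [pow_two]; rw [real_inner_comm X (b i)]
  have hsymmdot : ∀ u w : V → ℝ, u ⬝ᵥ (L *ᵥ w) = (L *ᵥ u) ⬝ᵥ w :=
    fun u w => lap_dot_symm G u w
  have hQ : x ⬝ᵥ (L *ᵥ x) = ∑ i, μ i * c i ^ 2 := by
    set Y : EuclideanSpace ℝ V := (WithLp.equiv 2 (V → ℝ)).symm (L *ᵥ x) with hYdef
    have hYy : (WithLp.equiv 2 (V → ℝ)) Y = L *ᵥ x := Equiv.apply_symm_apply _ _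
    have h := b.sum_inner_mul_inner X Y
    rw [hinner_dot X Y, hXx, hYy] at h
    rw [← h]
    refine Finset.sum_congr rfl fun i _ => ?_
    have h1 : (inner ℝ (b i) Y : ℝ) = μ i * c i := by
      rw [hinner_dot (b i) Y, hYy, hsymmdot, WithLp.equiv_apply, hL.mulVec_eigenvectorBasis i,
        smul_dotProduct, smul_eq_mul, hcdef]
      simp only
      rw [hinner_dot (b i) X, hXx]
      rfl
    rw [h1, show (inner ℝ X (b i) : ℝ) = c i from (real_inner_comm X (b i)).symm]
    ring
  have hker : ∀ i, μ i = 0 → c i = 0 := by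
    intro i hi
    have h0 : L *ᵥ (WithLp.equiv 2 (V → ℝ)) (b i) = 0 := by
      rw [WithLp.equiv_apply, hL.mulVec_eigenvectorBasis i, ← hμdef, hi, zero_smul]
    have hconst : ∀ u v : V,
        (WithLp.equiv 2 (V → ℝ)) (b i) u = (WithLp.equiv 2 (V → ℝ)) (b i) v := by
      intro u v
      have := (SimpleGraph.lapMatrix_mulVec_eq_zero_iff_forall_reachable G).mp h0
      exact this u v (hconn u v)
    obtain ⟨v₀⟩ := hconn.nonempty
    have : c i = (WithLp.equiv 2 (V → ℝ)) (b i) v₀ * ∑ v, x v := by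
      rw [hcdef]
      simp only
      rw [hinner_dot (b i) X, hXx, dotProduct, Finset.mul_sum]
      exact Finset.sum_congr rfl fun v _ => by rw [hconst v v₀]
    rw [this, hx, mul_zero]
  have hmem : ∀ i, μ i ∈ spectrum ℝ L := fun i => hL.eigenvalues_mem_spectrum_real i
  constructor
  · rw [hnorm, hQ, Finset.mul_sum]
    refine Finset.sum_le_sum fun i _ => ?_
    by_cases h : μ i = 0
    · rw [hker i h, h]; ring_nf; exact le_refl _
    · exact mul_le_mul_of_nonneg_right (hσ₂.2 ⟨hmem i, h⟩) (sq_nonneg _)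
  · rw [hnorm, hQ, Finset.mul_sum]
    exact Finset.sum_le_sum fun i _ =>
      mul_le_mul_of_nonneg_right (hσₙ.2 (hmem i)) (sq_nonneg _)

private lemma aux_sqrt_cs {A B C D : ℝ} (hA : 0 ≤ A) (hB : 0 ≤ B) (hC : 0 ≤ C) (hD : 0 ≤ D) :
    Real.sqrt (A * B) + Real.sqrt (C * D) ≤ Real.sqrt ((A + C) * (B + D)) := by
  rw [Real.sqrt_mul hA B, Real.sqrt_mul hC D]
  have hx0 : 0 ≤ Real.sqrt A * Real.sqrt B + Real.sqrt C * Real.sqrt D := by positivity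
  have hsq : (Real.sqrt A * Real.sqrt B + Real.sqrt C * Real.sqrt D)^2 ≤
      (A + C) * (B + D) := by
    nlinarith [Real.sq_sqrt hA, Real.sq_sqrt hB, Real.sq_sqrt hC, Real.sq_sqrt hD,
      sq_nonneg (Real.sqrt A * Real.sqrt D - Real.sqrt C * Real.sqrt B),
      Real.sqrt_nonneg A, Real.sqrt_nonneg B, Real.sqrt_nonneg C, Real.sqrt_nonneg D]
  calc Real.sqrt A * Real.sqrt B + Real.sqrt C * Real.sqrt D
      = Real.sqrt ((Real.sqrt A * Real.sqrt B + Real.sqrt C * Real.sqrt D)^2) :=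
        (Real.sqrt_sq hx0).symm
    _ ≤ Real.sqrt ((A + C) * (B + D)) := Real.sqrt_le_sqrt hsq

private lemma aux_final {σ₂ σₙ n nY nZ α : ℝ}
    (h : ((σₙ + σ₂) * (n * nY * nZ))^2 ≤
      ((σₙ - σ₂) * (n * nY * (n - nY))) * ((σₙ - σ₂) * (n * nZ * (n - nZ))))
    (hn : 0 < n) (hnY : 0 < nY) (hnZ : 0 < nZ) (hY : nY < n) (hZ : nZ < n)
    (hα : α = -(σ₂ + σₙ) / 2) (hσ : 0 < σ₂ + σₙ) :
    nY * nZ / ((n - nY) * (n - nZ)) ≤ (α + σₙ)^2 / α^2 := by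
  have hαneg : α < 0 := by rw [hα]; linarith
  have hα2 : 0 < α^2 := by rw [pow_two]; exact mul_pos_of_neg_of_neg hαneg hαneg
  have hden : 0 < (n - nY) * (n - nZ) :=
    mul_pos (by linarith) (by linarith)
  have key2 : (σₙ + σ₂)^2 * (nY * nZ) ≤ (σₙ - σ₂)^2 * ((n - nY) * (n - nZ)) := by
    have hK : (0:ℝ) < n^2 * nY * nZ := by positivity
    rw [← mul_le_mul_iff_of_pos_right hK]
    have eL : ((σₙ + σ₂) * (n * nY * nZ))^2 =
        (σₙ + σ₂)^2 * (nY * nZ) * (n^2 * nY * nZ) := by ring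
    have eR : ((σₙ - σ₂) * (n * nY * (n - nY))) * ((σₙ - σ₂) * (n * nZ * (n - nZ))) =
        (σₙ - σ₂)^2 * ((n - nY) * (n - nZ)) * (n^2 * nY * nZ) := by ring
    linarith [h, eL, eR]
  rw [div_le_div_iff₀ hden hα2]
  have e1 : α^2 = (σₙ + σ₂)^2 / 4 := by rw [hα]; ring
  have e2 : (α + σₙ)^2 = (σₙ - σ₂)^2 / 4 := by rw [hα]; ring
  rw [e1, e2]
  linarith [key2]

set_option maxHeartbeats 2000000 in
theorem stmt18 {V : Type*} [Fintype V] [DecidableEq V]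
    (G : SimpleGraph V) [DecidableRel G.Adj] (hconn : G.Connected)
    (σ₂ σₙ : ℝ)
    (hσ₂ : IsLeast {x : ℝ | x ∈ spectrum ℝ (G.lapMatrix ℝ) ∧ x ≠ 0} σ₂)
    (hσₙ : IsGreatest (spectrum ℝ (G.lapMatrix ℝ)) σₙ)
    (Y Z : Finset V) (hdisj : Disjoint Y Z)
    (hsep : ∀ z ∈ Z, ∀ y ∈ Y, ¬ G.Adj z y)
    (α : ℝ) (hα : α = -(σ₂ + σₙ) / 2) :
    ((Y.card : ℝ) * Z.card) /
        (((Fintype.card V : ℝ) - Y.card) * ((Fintype.card V : ℝ) - Z.card)) ≤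
      (α + σₙ)^2 / α^2 := by
  -- basic eigenvalue positivity
  have hPSD : (G.lapMatrix ℝ).PosSemidef := SimpleGraph.posSemidef_lapMatrix ℝ G
  have hL : (G.lapMatrix ℝ).IsHermitian := hPSD.1
  have hσ₂pos : 0 < σ₂ := by
    have hmem := hσ₂.1.1
    rw [hL.spectrum_real_eq_range_eigenvalues] at hmem
    obtain ⟨j, hj⟩ := hmem
    have := hPSD.eigenvalues_nonneg j
    rcases lt_or_eq_of_le (hj ▸ this) with h | h
    · exact h
    · exact absurd h.symm hσ₂.1.2
  have hσle : σ₂ ≤ σₙ := hσₙ.2 hσ₂.1.1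
  have hσₙpos : 0 < σₙ := lt_of_lt_of_le hσ₂pos hσle
  have hRHS : 0 ≤ (α + σₙ)^2 / α^2 := div_nonneg (sq_nonneg _) (sq_nonneg _)
  -- trivial cases
  by_cases hY0 : Y.card = 0
  · rw [hY0]; simpa using hRHS
  by_cases hZ0 : Z.card = 0
  · rw [hZ0]; simpa using hRHS
  -- notation
  set L := G.lapMatrix ℝ with hLdef
  have hVne : Nonempty V := hconn.nonempty
  set n : ℝ := (Fintype.card V : ℝ) with hndef
  set nY : ℝ := (Y.card : ℝ) with hnYdef
  set nZ : ℝ := (Z.card : ℝ) with hnZdef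
  clear_value n nY nZ
  have hn : 0 < n := by
    rw [hndef]; exact_mod_cast Fintype.card_pos
  have hnY : 0 < nY := by
    rw [hnYdef]; exact_mod_cast Nat.pos_of_ne_zero hY0
  have hnZ : 0 < nZ := by
    rw [hnZdef]; exact_mod_cast Nat.pos_of_ne_zero hZ0
  have hcard : nY + nZ ≤ n := by
    rw [hnYdef, hnZdef, hndef]
    have h1 : Y.card + Z.card = (Y ∪ Z).card := (Finset.card_union_of_disjoint hdisj).symm
    have h2 : (Y ∪ Z).card ≤ Fintype.card V := Finset.card_le_univ _
    exact_mod_cast h1 ▸ h2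
  have hnYlt : nY < n := by linarith
  have hnZlt : nZ < n := by linarith
  -- indicator vectors
  set iY : V → ℝ := fun v => if v ∈ Y then 1 else 0 with hiYdef
  set iZ : V → ℝ := fun v => if v ∈ Z then 1 else 0 with hiZdef
  set y : V → ℝ := fun v => n * iY v - nY with hydef
  set z : V → ℝ := fun v => n * iZ v - nZ with hzdef
  have hsumY : ∑ v, iY v = nY := by
    rw [hiYdef, hnYdef]
    simp [Finset.sum_ite_mem]
  have hsumZ : ∑ v, iZ v = nZ := by
    rw [hiZdef, hnZdef]
    simp [Finset.sum_ite_mem]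
  have hconst : ∀ f : V → ℝ, ∀ k : ℝ, ∑ _v : V, k = n * k := by
    intro f k
    rw [Finset.sum_const, Finset.card_univ, hndef, nsmul_eq_mul]
  have hsumy : ∑ v, y v = 0 := by
    rw [hydef]
    simp only [Finset.sum_sub_distrib, ← Finset.mul_sum, hsumY]
    rw [Finset.sum_const, Finset.card_univ, hndef, nsmul_eq_mul]
    ring
  have hsumz : ∑ v, z v = 0 := by
    rw [hzdef]
    simp only [Finset.sum_sub_distrib, ← Finset.mul_sum, hsumZ]
    rw [Finset.sum_const, Finset.card_univ, hndef, nsmul_eq_mul]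
    ring
  -- dot product expansions
  have hdot : ∀ (f g : V → ℝ) (bf bg : ℝ),
      (fun v => n * f v - bf) ⬝ᵥ (fun v => n * g v - bg) =
        n * n * (f ⬝ᵥ g) - n * bg * (∑ v, f v) - bf * n * (∑ v, g v) + n * (bf * bg) := by
    intro f g bf bg
    have h : ∀ v, (n * f v - bf) * (n * g v - bg) =
        n * n * (f v * g v) - n * bg * f v - bf * n * g v + bf * bg := by
      intro v; ring
    simp only [dotProduct]
    simp_rw [h, Finset.sum_add_distrib, Finset.sum_sub_distrib, ← Finset.mul_sum]
    rw [Finset.sum_const, Finset.card_univ, hndef, nsmul_eq_mul]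
    ring
  have hdYY : iY ⬝ᵥ iY = nY := by
    rw [← hsumY]
    refine Finset.sum_congr rfl fun v _ => ?_
    rw [hiYdef]; by_cases h : v ∈ Y <;> simp [h]
  have hdZZ : iZ ⬝ᵥ iZ = nZ := by
    rw [← hsumZ]
    refine Finset.sum_congr rfl fun v _ => ?_
    rw [hiZdef]; by_cases h : v ∈ Z <;> simp [h]
  have hdYZ : iY ⬝ᵥ iZ = 0 := by
    refine Finset.sum_eq_zero fun v _ => ?_
    rw [hiYdef, hiZdef]
    by_cases h : v ∈ Y
    · have : v ∉ Z := Finset.disjoint_left.mp hdisj h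
      simp [h, this]
    · simp [h]
  have hp : y ⬝ᵥ y = n * nY * (n - nY) := by
    rw [hydef, hdot iY iY nY nY, hdYY, hsumY]; ring
  have hq : z ⬝ᵥ z = n * nZ * (n - nZ) := by
    rw [hzdef, hdot iZ iZ nZ nZ, hdZZ, hsumZ]; ring
  have hs : y ⬝ᵥ z = -(n * nY * nZ) := by
    rw [hydef, hzdef, hdot iY iZ nY nZ, hdYZ, hsumY, hsumZ]; ring
  have hsz : z ⬝ᵥ y = -(n * nY * nZ) := by rw [dotProduct_comm]; exact hs
  -- Laplacian cross terms vanish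
  have hL1 : L *ᵥ (fun _ => (1:ℝ)) = 0 := SimpleGraph.lapMatrix_mulVec_const_eq_zero G
  have hLiz : L *ᵥ z = n • (L *ᵥ iZ) := by
    have hz' : z = n • iZ - nZ • (fun _ => (1:ℝ)) := by
      funext v; rw [hzdef]; simp [Pi.smul_apply, smul_eq_mul]
    rw [hz', mulVec_sub, mulVec_smul, mulVec_smul, hL1, smul_zero, sub_zero]
  have hLiy : L *ᵥ y = n • (L *ᵥ iY) := by
    have hy' : y = n • iY - nY • (fun _ => (1:ℝ)) := by
      funext v; rw [hydef]; simp [Pi.smul_apply, smul_eq_mul]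
    rw [hy', mulVec_sub, mulVec_smul, mulVec_smul, hL1, smul_zero, sub_zero]
  have hiYLiZ : iY ⬝ᵥ (L *ᵥ iZ) = 0 := by
    simp only [dotProduct, mulVec, dotProduct]
    refine Finset.sum_eq_zero fun u _ => ?_
    rw [mul_comm, Finset.sum_mul]
    refine Finset.sum_eq_zero fun v _ => ?_
    by_cases hv : v ∈ Z
    · by_cases hu : u ∈ Y
      · have huv : u ≠ v := fun h => Finset.disjoint_left.mp hdisj hu (h ▸ hv)
        have hadj : ¬ G.Adj u v := fun h => hsep v hv u hu h.symm
        have hLuv : L u v = 0 := by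
          rw [hLdef, SimpleGraph.lapMatrix, Matrix.sub_apply, SimpleGraph.degMatrix,
            Matrix.diagonal_apply_ne _ huv, SimpleGraph.adjMatrix_apply, if_neg hadj]
          ring
        rw [hLuv]; ring
      · rw [hiYdef]; simp [hu]
    · rw [hiZdef]; simp [hv]
  have hcross : y ⬝ᵥ (L *ᵥ z) = 0 := by
    rw [hLiz, dotProduct_smul]
    have hy' : y = n • iY - nY • (fun _ => (1:ℝ)) := by
      funext v; rw [hydef]; simp [Pi.smul_apply, smul_eq_mul]
    rw [hy', sub_dotProduct, smul_dotProduct, smul_dotProduct, hiYLiZ,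
      lap_dot_symm G (fun _ => (1:ℝ)) iZ, hL1]
    simp
  have hcross' : z ⬝ᵥ (L *ᵥ y) = 0 := by
    rw [lap_dot_symm G z y, dotProduct_comm]
    exact hcross
  -- abbreviations for quadratic forms
  set aa : ℝ := y ⬝ᵥ (L *ᵥ y) with haadef
  set bb : ℝ := z ⬝ᵥ (L *ᵥ z) with hbbdef
  set p : ℝ := n * nY * (n - nY) with hpdef
  set q : ℝ := n * nZ * (n - nZ) with hqdef
  set cc : ℝ := n * nY * nZ with hccdef
  clear_value aa bb p q cc
  -- quadratic form and norm of y + t z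
  have hexps : ∀ t : ℝ,
      ((y + t • z) ⬝ᵥ (y + t • z) = p + 2 * t * (-cc) + t * t * q) ∧
      ((y + t • z) ⬝ᵥ (L *ᵥ (y + t • z)) = aa + t * t * bb) := by
    intro t
    constructor
    · simp only [add_dotProduct, dotProduct_add, smul_dotProduct, dotProduct_smul,
        smul_eq_mul, hp, hq, hs, hsz]
      rw [hpdef, hqdef, hccdef]; ring
    · simp only [mulVec_add, mulVec_smul, add_dotProduct, dotProduct_add,
        smul_dotProduct, dotProduct_smul, smul_eq_mul, hcross, hcross']
      rw [← haadef, ← hbbdef]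
      ring
  have hsumt : ∀ t : ℝ, ∑ v, (y + t • z) v = 0 := by
    intro t
    simp only [Pi.add_apply, Pi.smul_apply, smul_eq_mul, Finset.sum_add_distrib,
      ← Finset.mul_sum, hsumy, hsumz]
    ring
  have hquad := fun (t : ℝ) =>
    quad_form_bounds G hconn σ₂ σₙ hσ₂ hσₙ (y + t • z) (hsumt t)
  -- individual bounds (t = 0 can't be read off directly; use y and z separately)
  have hquady := quad_form_bounds G hconn σ₂ σₙ hσ₂ hσₙ y hsumy
  have hquadz := quad_form_bounds G hconn σ₂ σₙ hσ₂ hσₙ z hsumz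
  set A : ℝ := σₙ * p - aa with hAdef
  set B : ℝ := σₙ * q - bb with hBdef
  set C : ℝ := aa - σ₂ * p with hCdef
  set D : ℝ := bb - σ₂ * q with hDdef
  clear_value A B C D
  have hA : 0 ≤ A := by have h := hquady.2; rw [← hLdef, hp, ← haadef] at h; rw [hAdef]; linarith
  have hB : 0 ≤ B := by have h := hquadz.2; rw [← hLdef, hq, ← hbbdef] at h; rw [hBdef]; linarith
  have hC : 0 ≤ C := by have h := hquady.1; rw [← hLdef, hp, ← haadef] at h; rw [hCdef]; linarith
  have hD : 0 ≤ D := by have h := hquadz.1; rw [← hLdef, hq, ← hbbdef] at h; rw [hDdef]; linarith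
  -- discriminant inequalities
  have hup : ∀ t : ℝ, 0 ≤ B * (t * t) + (-(2 * σₙ * cc)) * t + A := by
    intro t
    have h := (hquad t).2
    rw [← hLdef, (hexps t).1, (hexps t).2] at h
    have e : B * (t * t) + (-(2 * σₙ * cc)) * t + A =
        σₙ * (p + 2 * t * (-cc) + t * t * q) - (aa + t * t * bb) := by
      rw [hAdef, hBdef]; ring
    rw [e]; linarith
  have hlow : ∀ t : ℝ, 0 ≤ D * (t * t) + (2 * σ₂ * cc) * t + C := by
    intro t
    have h := (hquad t).1
    rw [← hLdef, (hexps t).1, (hexps t).2] at h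
    have e : D * (t * t) + (2 * σ₂ * cc) * t + C =
        (aa + t * t * bb) - σ₂ * (p + 2 * t * (-cc) + t * t * q) := by
      rw [hCdef, hDdef]; ring
    rw [e]; linarith
  have hd1 := discrim_le_zero hup
  have hd2 := discrim_le_zero hlow
  rw [discrim] at hd1 hd2
  have hAB : (σₙ * cc)^2 ≤ A * B := by
    have e1 : (-(2 * σₙ * cc))^2 = 4 * ((σₙ * cc)^2) := by ring
    have e2 : B * A = A * B := mul_comm B A
    linarith [hd1, e1, e2]
  have hCD : (σ₂ * cc)^2 ≤ C * D := by
    have e1 : (2 * σ₂ * cc)^2 = 4 * ((σ₂ * cc)^2) := by ring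
    have e2 : D * C = C * D := mul_comm D C
    linarith [hd2, e1, e2]
  -- combine via square roots
  have hcc : 0 ≤ cc := by rw [hccdef]; positivity
  have step1 : σₙ * cc ≤ Real.sqrt (A * B) :=
    (Real.le_sqrt (by positivity) (mul_nonneg hA hB)).mpr hAB
  have step2 : σ₂ * cc ≤ Real.sqrt (C * D) :=
    (Real.le_sqrt (by positivity) (mul_nonneg hC hD)).mpr hCD
  have hsqrt : Real.sqrt (A * B) + Real.sqrt (C * D) ≤ Real.sqrt ((A + C) * (B + D)) :=
    aux_sqrt_cs hA hB hC hD
  have chain : (σₙ + σ₂) * cc ≤ Real.sqrt ((A + C) * (B + D)) := by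
    have e : (σₙ + σ₂) * cc = σₙ * cc + σ₂ * cc := by ring
    rw [e]; linarith
  have keyineq : ((σₙ + σ₂) * cc)^2 ≤ (A + C) * (B + D) :=
    (Real.le_sqrt (by positivity) (mul_nonneg (by linarith) (by linarith))).mp chain
  have hACp : A + C = (σₙ - σ₂) * p := by rw [hAdef, hCdef]; ring
  have hBDq : B + D = (σₙ - σ₂) * q := by rw [hBdef, hDdef]; ring
  rw [hACp, hBDq, hpdef, hqdef, hccdef] at keyineq
  exact aux_final keyineq hn hnY hnZ hnYlt hnZlt hα (by linarith)
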